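/- Let P, ℓ, μ > 0 and set g = Pℓ²/(8μ). Define m(r) = μr³/(P²ℓ² + r²)^{3/2}. Then for every r > 0, m'(r) = 3μP²ℓ²r²/(P²ℓ² + r²)^{5/2}, and this satisfies m'(r) = −(r²/(8ℓ))·(−3P³ℓ⁵/(g(P²ℓ² + r²)^{5/2})), i.e., m solves the purely magnetic field equation m'(r) = −r²·𝓛(F(r))/(8ℓ) with 𝓛(F(r)) = −3P³ℓ⁵/(g(P²ℓ² + r²)^{5/2}). Moreover m(r)/r³ → μ/(Pℓ)³ as r → 0⁺ and m(r) → μ as r → +∞. -/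

import Mathlib

open Filter Topology Set

/-- **Bardeen-class regular magnetic black string.** With `g = Pℓ²/(8μ)` and
`m(r) = μr³/(P²ℓ² + r²)^{3/2}`, one has `m'(r) = 3μP²ℓ²r²/(P²ℓ² + r²)^{5/2}`, which equals
`-(r²/(8ℓ)) 𝓛(F(r))` with `𝓛(F(r)) = -3P³ℓ⁵/(g(P²ℓ² + r²)^{5/2})`; moreover
`m(r)/r³ → μ/(Pℓ)³` as `r → 0⁺` (regular core) and `m(r) → μ` as `r → +∞`. -/
theorem bardeen_mass_function (P ℓ μ : ℝ) (hP : 0 < P) (hℓ : 0 < ℓ) (hμ : 0 < μ)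
    (g : ℝ) (hg : g = P * ℓ ^ 2 / (8 * μ))
    (m : ℝ → ℝ)
    (hm : ∀ r, m r = μ * r ^ 3 / (P ^ 2 * ℓ ^ 2 + r ^ 2) ^ ((3:ℝ)/2)) :
    (∀ r > (0:ℝ), HasDerivAt m
        (3 * μ * P ^ 2 * ℓ ^ 2 * r ^ 2 / (P ^ 2 * ℓ ^ 2 + r ^ 2) ^ ((5:ℝ)/2)) r) ∧
    (∀ r > (0:ℝ),
      3 * μ * P ^ 2 * ℓ ^ 2 * r ^ 2 / (P ^ 2 * ℓ ^ 2 + r ^ 2) ^ ((5:ℝ)/2)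
        = -(r ^ 2 / (8 * ℓ)) *
            (-3 * P ^ 3 * ℓ ^ 5 / (g * (P ^ 2 * ℓ ^ 2 + r ^ 2) ^ ((5:ℝ)/2)))) ∧
    Tendsto (fun r => m r / r ^ 3) (𝓝[>] (0:ℝ)) (𝓝 (μ / (P * ℓ) ^ 3)) ∧
    Tendsto m atTop (𝓝 μ) := by
  have hA0 : 0 < P ^ 2 * ℓ ^ 2 := by positivity
  refine ⟨?_, ?_, ?_, ?_⟩
  · -- derivative
    intro r hr
    have hX : 0 < P ^ 2 * ℓ ^ 2 + r ^ 2 := by positivity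
    have h1 : HasDerivAt (fun r : ℝ => μ * r ^ 3) (μ * (3 * r ^ 2)) r := by
      simpa using (hasDerivAt_pow 3 r).const_mul μ
    have hp : HasDerivAt (fun r : ℝ => P ^ 2 * ℓ ^ 2 + r ^ 2) (2 * r) r := by
      simpa using ((hasDerivAt_pow 2 r).const_add (P ^ 2 * ℓ ^ 2))
    have h2 : HasDerivAt (fun r : ℝ => (P ^ 2 * ℓ ^ 2 + r ^ 2) ^ ((3:ℝ)/2))
        ((2 * r) * ((3:ℝ)/2) * (P ^ 2 * ℓ ^ 2 + r ^ 2) ^ ((3:ℝ)/2 - 1)) r :=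
      hp.rpow_const (Or.inl hX.ne')
    have h3 := h1.div h2 (by positivity)
    have hEq : m = fun r => μ * r ^ 3 / (P ^ 2 * ℓ ^ 2 + r ^ 2) ^ ((3:ℝ)/2) := funext hm
    rw [hEq]
    refine h3.congr_deriv ?_
    have e1 : (P ^ 2 * ℓ ^ 2 + r ^ 2) ^ ((3:ℝ)/2)
        = (P ^ 2 * ℓ ^ 2 + r ^ 2) * (P ^ 2 * ℓ ^ 2 + r ^ 2) ^ ((1:ℝ)/2) := by
      rw [show (3:ℝ)/2 = 1 + 1/2 by norm_num, Real.rpow_add hX, Real.rpow_one]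
    have e5 : (P ^ 2 * ℓ ^ 2 + r ^ 2) ^ ((5:ℝ)/2)
        = (P ^ 2 * ℓ ^ 2 + r ^ 2) ^ 2 * (P ^ 2 * ℓ ^ 2 + r ^ 2) ^ ((1:ℝ)/2) := by
      rw [show (5:ℝ)/2 = 2 + 1/2 by norm_num, Real.rpow_add hX]
      norm_num [Real.rpow_two]
    have e0 : (3:ℝ)/2 - 1 = 1/2 := by norm_num
    rw [e0, e1, e5]
    set s := (P ^ 2 * ℓ ^ 2 + r ^ 2) ^ ((1:ℝ)/2) with hs
    have hs0 : 0 < s := Real.rpow_pos_of_pos hX _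
    have hs2 : s ^ 2 = P ^ 2 * ℓ ^ 2 + r ^ 2 := by
      rw [hs, ← Real.rpow_natCast ((P ^ 2 * ℓ ^ 2 + r ^ 2) ^ ((1:ℝ)/2)) 2,
        ← Real.rpow_mul hX.le]
      norm_num
    field_simp
    nlinarith [hs2, sq_nonneg s, sq_nonneg r, hs0, hX]
  · -- field equation
    intro r hr
    subst hg
    have hX : (0:ℝ) < (P ^ 2 * ℓ ^ 2 + r ^ 2) ^ ((5:ℝ)/2) :=
      Real.rpow_pos_of_pos (by positivity) _
    field_simp
  · -- limit at 0⁺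
    have key : ∀ r ∈ Ioi (0:ℝ),
        μ / (P ^ 2 * ℓ ^ 2 + r ^ 2) ^ ((3:ℝ)/2) = m r / r ^ 3 := by
      intro r hr
      have hr0 : (r:ℝ) ≠ 0 := ne_of_gt hr
      have hX : (0:ℝ) < (P ^ 2 * ℓ ^ 2 + r ^ 2) ^ ((3:ℝ)/2) :=
        Real.rpow_pos_of_pos (by positivity) _
      rw [hm]
      field_simp
    have hA3 : (P ^ 2 * ℓ ^ 2) ^ ((3:ℝ)/2) = (P * ℓ) ^ 3 := by
      rw [show P ^ 2 * ℓ ^ 2 = ((P * ℓ) ^ 2 : ℝ) by ring,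
        ← Real.rpow_natCast (P * ℓ) 2, ← Real.rpow_mul (by positivity)]
      norm_num
    have hc : ContinuousAt (fun r : ℝ => μ / (P ^ 2 * ℓ ^ 2 + r ^ 2) ^ ((3:ℝ)/2)) 0 := by
      apply ContinuousAt.div continuousAt_const
      · exact (ContinuousAt.rpow_const (by fun_prop) (Or.inl (by positivity)))
      · simp only [ne_eq, zero_pow, add_zero]
        positivity
    have h3 : Tendsto (fun r : ℝ => μ / (P ^ 2 * ℓ ^ 2 + r ^ 2) ^ ((3:ℝ)/2))
        (𝓝[>] (0:ℝ)) (𝓝 (μ / (P * ℓ) ^ 3)) := by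
      have := hc.continuousWithinAt (s := Ioi (0:ℝ))
      simpa [ContinuousWithinAt, hA3] using this
    exact h3.congr' (by filter_upwards [self_mem_nhdsWithin] with r hr using key r hr)
  · -- limit at ∞
    have hlim : Tendsto (fun r : ℝ => r ^ 2 / (P ^ 2 * ℓ ^ 2 + r ^ 2)) atTop (𝓝 1) := by
      have h0 : Tendsto (fun r : ℝ => P ^ 2 * ℓ ^ 2 / (P ^ 2 * ℓ ^ 2 + r ^ 2)) atTop (𝓝 0) := by
        apply Tendsto.div_atTop tendsto_const_nhds
        exact tendsto_atTop_add_const_left _ _ (tendsto_pow_atTop (by norm_num))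
      have : Tendsto (fun r : ℝ => 1 - P ^ 2 * ℓ ^ 2 / (P ^ 2 * ℓ ^ 2 + r ^ 2)) atTop
          (𝓝 (1 - 0)) := tendsto_const_nhds.sub h0
      rw [sub_zero] at this
      refine this.congr' ?_
      filter_upwards [eventually_gt_atTop (0:ℝ)] with r hr
      have hX : (0:ℝ) < P ^ 2 * ℓ ^ 2 + r ^ 2 := by positivity
      field_simp
      ring
    have hcont : ContinuousAt (fun x : ℝ => μ * x ^ ((3:ℝ)/2)) 1 :=
      continuousAt_const.mul (Real.continuousAt_rpow_const 1 _ (Or.inl one_ne_zero))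
    have h4 : Tendsto (fun r : ℝ => μ * (r ^ 2 / (P ^ 2 * ℓ ^ 2 + r ^ 2)) ^ ((3:ℝ)/2))
        atTop (𝓝 μ) := by
      have := (hcont.tendsto).comp hlim
      simpa [Function.comp_def] using this
    refine h4.congr' ?_
    filter_upwards [eventually_gt_atTop (0:ℝ)] with r hr
    have hX : (0:ℝ) < P ^ 2 * ℓ ^ 2 + r ^ 2 := by positivity
    rw [hm, Real.div_rpow (sq_nonneg r) hX.le]
    have : (r ^ 2 : ℝ) ^ ((3:ℝ)/2) = r ^ 3 := by
      rw [← Real.rpow_natCast r 2, ← Real.rpow_mul hr.le]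
      norm_num
    rw [this, mul_div_assoc]
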